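/- Let A be a uniformly closed function algebra on a locally compact Hausdorff space X, f ∈ A with ‖f‖ = 1, and x₀ ∈ Ch(A) with |f(x₀)| < 1. Set λ = f(x₀)/|f(x₀)| if f(x₀) ≠ 0 and λ = 1 otherwise. Then for each r ∈ (0,1) there exists g ∈ A with ‖g‖ = 1, g(x₀) = 1, such that h := r·f + (1 − r|f(x₀)|)·λ·g satisfies ‖h‖ = 1 and h(x₀) = λ. -/

import Mathlib

open scoped ZeroAtInfty

def StronglySeparates {X : Type*} [TopologicalSpace X] (A : Set C₀(X, ℂ)) : Prop :=
  (∀ x : X, ∃ f ∈ A, f x ≠ 0) ∧ ∀ y z : X, y ≠ z → ∃ g ∈ A, g y ≠ g z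

def IsPeaking {X : Type*} [TopologicalSpace X] (A : Set C₀(X, ℂ)) (g : C₀(X, ℂ)) : Prop :=
  g ∈ A ∧ ‖g‖ = 1 ∧ ∀ x : X, ‖g x‖ = 1 → g x = 1

/-- Membership in the Choquet boundary, characterized by the Urysohn-type peaking property
(Rao–Roy): for every `ε > 0` and open `O ∋ x` there is a peaking function `u ∈ A` with
`u x = 1` and `|u| < ε` off `O`. -/
def InChoquet {X : Type*} [TopologicalSpace X] (A : Set C₀(X, ℂ)) (x : X) : Prop :=
  ∀ ε : ℝ, 0 < ε → ∀ O : Set X, IsOpen O → x ∈ O →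
    ∃ u : C₀(X, ℂ), IsPeaking A u ∧ u x = 1 ∧ ∀ z ∉ O, ‖u z‖ < ε

section Aux

variable {X : Type*} [TopologicalSpace X]

lemma aux_norm_apply_le (f : C₀(X, ℂ)) (x : X) : ‖f x‖ ≤ ‖f‖ := by
  rw [← ZeroAtInftyContinuousMap.norm_toBCF_eq_norm]
  exact f.toBCF.norm_coe_le_norm x

/-- Evaluation at a point as a continuous linear map. -/
noncomputable def evalCLM (x : X) : C₀(X, ℂ) →L[ℂ] ℂ :=
  LinearMap.mkContinuous
    { toFun := fun g => g x
      map_add' := fun a b => rfl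
      map_smul' := fun c a => rfl }
    1 (fun g => by simpa using aux_norm_apply_le g x)

lemma evalCLM_apply (x : X) (g : C₀(X, ℂ)) : evalCLM x g = g x := rfl

lemma aux_norm_le (f : C₀(X, ℂ)) {C : ℝ} (hC : 0 ≤ C) (h : ∀ x, ‖f x‖ ≤ C) : ‖f‖ ≤ C := by
  rw [← ZeroAtInftyContinuousMap.norm_toBCF_eq_norm]
  exact (BoundedContinuousFunction.norm_le hC).2 h

lemma aux_geom_sum (N : ℕ) : ∑ i ∈ Finset.range N, ((1:ℝ)/2)^(i+1) = 1 - (1/2)^N := by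
  induction N with
  | zero => simp
  | succ n ih => rw [Finset.sum_range_succ, ih]; ring

lemma aux_hasSum_half : HasSum (fun n : ℕ => ((1:ℝ)/2)^(n+1)) 1 := by
  have h := hasSum_geometric_of_lt_one (by norm_num : (0:ℝ) ≤ 1/2) (by norm_num : (1:ℝ)/2 < 1)
  have h2 := h.mul_left (1/2)
  simp only [pow_succ, mul_comm] at h2 ⊢
  have e : (1/2:ℝ) * (1 - 1/2)⁻¹ = 1 := by norm_num
  rw [e] at h2
  exact h2

lemma aux_hasSum_half_complex : HasSum (fun n : ℕ => ((1:ℂ)/2)^(n+1)) 1 := by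
  have h := hasSum_geometric_of_norm_lt_one (by norm_num : ‖(1:ℂ)/2‖ < 1)
  have h2 := h.mul_left (1/2)
  have : (1/2 : ℂ) * (1 - 1/2)⁻¹ = 1 := by norm_num
  rw [this] at h2
  simpa [pow_succ, mul_comm] using h2

end Aux

set_option maxHeartbeats 1000000 in
theorem stmt6 {X : Type*} [TopologicalSpace X] [LocallyCompactSpace X] [T2Space X]
    (A : NonUnitalSubalgebra ℂ C₀(X, ℂ)) (hA : IsClosed (A : Set C₀(X, ℂ)))
    (hsep : StronglySeparates (A : Set C₀(X, ℂ)))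
    (f : C₀(X, ℂ)) (hfA : f ∈ A) (hf : ‖f‖ = 1)
    (x₀ : X) (hx₀ : InChoquet (A : Set C₀(X, ℂ)) x₀) (hlt : ‖f x₀‖ < 1)
    (lam : ℂ) (hlam : lam = if f x₀ = 0 then 1 else f x₀ / (‖f x₀‖ : ℂ)) :
    ∀ r : ℝ, 0 < r → r < 1 →
      ∃ g ∈ (A : Set C₀(X, ℂ)), ‖g‖ = 1 ∧ g x₀ = 1 ∧
        ‖(r : ℂ) • f + (((1 - r * ‖f x₀‖ : ℝ) : ℂ) * lam) • g‖ = 1 ∧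
        ((r : ℂ) • f + (((1 - r * ‖f x₀‖ : ℝ) : ℂ) * lam) • g) x₀ = lam := by
  intro r hr0 hr1
  set m : ℝ := ‖f x₀‖ with hm_def
  have hm0 : 0 ≤ m := norm_nonneg _
  have hrm : r * m < 1 := by nlinarith [mul_pos hr0 (show (0:ℝ) < 1 - m by linarith)]
  have hrm' : 0 < 1 - r * m := by linarith
  -- |lam| = 1
  have hlam1 : ‖lam‖ = 1 := by
    by_cases h0 : f x₀ = 0
    · rw [hlam, if_pos h0]; simp
    · have hm_ne : m ≠ 0 := by rw [hm_def]; exact norm_ne_zero_iff.mpr h0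
      rw [hlam, if_neg h0, norm_div, Complex.norm_real, Real.norm_eq_abs, abs_of_nonneg hm0,
        ← hm_def, div_self hm_ne]
  -- f x₀ = m * lam
  have hfx₀ : f x₀ = (m : ℂ) * lam := by
    by_cases h0 : f x₀ = 0
    · have hm' : m = 0 := by rw [hm_def, h0, norm_zero]
      rw [hlam, if_pos h0, h0, hm']
      simp
    · have hm_ne : (m : ℂ) ≠ 0 := by
        simp only [ne_eq, Complex.ofReal_eq_zero, hm_def, norm_eq_zero]
        exact h0
      rw [hlam, if_neg h0]
      field_simp
  -- the small parameter ε
  set ε₀ : ℝ := (1 - r) / (1 - r * m) with hε₀_def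
  have hε₀_pos : 0 < ε₀ := div_pos (by linarith) hrm'
  set ε : ℝ := (1/2) * min ε₀ 1 with hε_def
  have hε_pos : 0 < ε := by positivity
  have hε_half : ε ≤ 1/2 := by
    have : min ε₀ 1 ≤ 1 := min_le_right _ _
    nlinarith
  have hε_le : ε ≤ ε₀ := by
    have h1 : min ε₀ 1 ≤ ε₀ := min_le_left _ _
    nlinarith
  have hε_lt1 : ε < 1 := lt_of_le_of_lt hε_half (by norm_num)
  -- key: (1 - r*m) * ε₀ = 1 - r
  have hε₀_key : (1 - r * m) * ε₀ = 1 - r := by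
    rw [hε₀_def]; field_simp
  -- the shrinking radii
  set C : ℝ := (1 - r * m) * (1 - ε) / r with hC_def
  have hC_pos : 0 < C := by
    apply div_pos _ hr0
    nlinarith
  set δ : ℕ → ℝ := fun n => C * (1/2)^(n+1) with hδ_def
  have hδ_pos : ∀ n, 0 < δ n := fun n => by positivity
  -- open sets
  set O : ℕ → Set X := fun n => {z | ‖f z‖ < m + δ n} with hO_def
  have hO_open : ∀ n, IsOpen (O n) :=
    fun n => isOpen_lt (Continuous.norm (map_continuous f)) continuous_const
  have hO_mem : ∀ n, x₀ ∈ O n := fun n => by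
    simp only [hO_def, Set.mem_setOf_eq, ← hm_def]
    linarith [hδ_pos n]
  -- the peaking functions
  have hu : ∀ n : ℕ, ∃ u : C₀(X, ℂ), (u ∈ A ∧ ‖u‖ = 1) ∧ u x₀ = 1 ∧
      ∀ z ∉ O n, ‖u z‖ < ε := by
    intro n
    obtain ⟨u, hpeak, hux₀, husmall⟩ := hx₀ ε hε_pos (O n) (hO_open n) (hO_mem n)
    exact ⟨u, ⟨hpeak.1, hpeak.2.1⟩, hux₀, husmall⟩
  choose u huA hux₀ husmall using hu
  -- the series
  set a : ℕ → ℝ := fun n => (1/2)^(n+1) with ha_def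
  have ha_pos : ∀ n, 0 < a n := fun n => by positivity
  set v : ℕ → C₀(X, ℂ) := fun n => ((a n : ℂ)) • u n with hv_def
  have hv_norm : ∀ n, ‖v n‖ = a n := by
    intro n
    show ‖((a n : ℝ) : ℂ) • u n‖ = a n
    rw [norm_smul (α := ℂ) (β := C₀(X, ℂ)), (huA n).2, mul_one, Complex.norm_real,
      Real.norm_eq_abs, abs_of_pos (ha_pos n)]
  have ha_summable : Summable a := aux_hasSum_half.summable
  have hv_summable : Summable v := by
    apply Summable.of_norm
    simpa only [hv_norm] using ha_summable
  set g : C₀(X, ℂ) := ∑' n, v n with hg_def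
  -- g ∈ A
  have hgA : g ∈ A := by
    have hpartial : ∀ N : ℕ, ∑ n ∈ Finset.range N, v n ∈ A := by
      intro N
      exact sum_mem (fun n _ => SMulMemClass.smul_mem _ ((huA n).1))
    have : Filter.Tendsto (fun N => ∑ n ∈ Finset.range N, v n) Filter.atTop (nhds g) :=
      hv_summable.hasSum.tendsto_sum_nat
    exact hA.mem_of_tendsto this (Filter.Eventually.of_forall hpartial)
  -- evaluation of g
  have hg_apply : ∀ z : X, g z = ∑' n, (a n : ℂ) * u n z := by
    intro z
    calc g z = evalCLM z (∑' n, v n) := rfl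
    _ = ∑' n, evalCLM z (v n) := (evalCLM z).map_tsum hv_summable
    _ = ∑' n, (a n : ℂ) * u n z := by
        refine tsum_congr (fun n => ?_)
        show (((a n : ℝ) : ℂ) • u n) z = _
        rw [ZeroAtInftyContinuousMap.smul_apply, smul_eq_mul]
  -- g x₀ = 1
  have hgx₀ : g x₀ = 1 := by
    rw [hg_apply x₀]
    have : (fun n => (a n : ℂ) * u n x₀) = fun n => ((1:ℂ)/2)^(n+1) := by
      funext n
      rw [hux₀ n, mul_one]
      show ((a n : ℝ) : ℂ) = ((1:ℂ)/2)^(n+1)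
      simp only [ha_def]
      push_cast
      ring
    rw [this, aux_hasSum_half_complex.tsum_eq]
  -- ‖g‖ ≤ 1
  have hg_norm_le : ‖g‖ ≤ 1 := by
    calc ‖g‖ ≤ ∑' n, ‖v n‖ := norm_tsum_le_tsum_norm (by simpa only [hv_norm] using ha_summable)
    _ = ∑' n, a n := by simp only [hv_norm]
    _ = 1 := aux_hasSum_half.tsum_eq
  have hg_norm : ‖g‖ = 1 := by
    refine le_antisymm hg_norm_le ?_
    calc (1:ℝ) = ‖g x₀‖ := by rw [hgx₀]; simp
    _ ≤ ‖g‖ := aux_norm_apply_le g x₀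
  -- the pointwise key estimate
  have hkey : ∀ z : X, r * ‖f z‖ + (1 - r * m) * ‖g z‖ ≤ 1 := by
    intro z
    have hgz_le : ‖g z‖ ≤ 1 := le_trans (aux_norm_apply_le g z) hg_norm_le
    by_cases hcase : ∀ n, ‖f z‖ < m + δ n
    · -- then ‖f z‖ ≤ m
      have hfzm : ‖f z‖ ≤ m := by
        by_contra hgt
        push_neg at hgt
        obtain ⟨k, hk⟩ := exists_pow_lt_of_lt_one
          (show (0:ℝ) < (‖f z‖ - m) / C from div_pos (by linarith) hC_pos)
          (show (1:ℝ)/2 < 1 by norm_num)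
        have h1 : δ k < ‖f z‖ - m := by
          have : C * ((1/2)^k * (1/2)) < C * ((‖f z‖ - m)/C) := by
            apply mul_lt_mul_of_pos_left _ hC_pos
            calc (1/2:ℝ)^k * (1/2) ≤ (1/2)^k * 1 := by
                  apply mul_le_mul_of_nonneg_left (by norm_num) (by positivity)
            _ < (‖f z‖ - m)/C := by rw [mul_one]; exact hk
          rw [mul_div_cancel₀ _ (ne_of_gt hC_pos)] at this
          calc δ k = C * ((1/2)^k * (1/2)) := by simp only [hδ_def]; ring
          _ < ‖f z‖ - m := this
        linarith [hcase k]
      nlinarith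
    · push_neg at hcase
      have hex : ∃ n, m + δ n ≤ ‖f z‖ := hcase
      set N := Nat.find hex with hN_def
      have hN : m + δ N ≤ ‖f z‖ := Nat.find_spec hex
      have hNlt : ∀ k < N, ‖f z‖ < m + δ k := by
        intro k hk
        have := Nat.find_min hex hk
        push_neg at this
        exact this
      -- for n ≥ N, z ∉ O n
      have hnot : ∀ n, N ≤ n → ‖u n z‖ < ε := by
        intro n hn
        apply husmall n
        simp only [hO_def, Set.mem_setOf_eq, not_lt]
        have hδ_mono : δ n ≤ δ N := by
          simp only [hδ_def]
          apply mul_le_mul_of_nonneg_left _ (le_of_lt hC_pos)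
          apply pow_le_pow_of_le_one (by norm_num) (by norm_num)
          omega
        linarith
      -- bound ‖g z‖
      set c : ℕ → ℝ := fun n => if n < N then a n else a n * ε with hc_def
      have hc_nonneg : ∀ n, 0 ≤ c n := by
        intro n
        simp only [hc_def]
        split_ifs
        · exact le_of_lt (ha_pos n)
        · positivity
      have hc_le_a : ∀ n, c n ≤ a n := by
        intro n
        simp only [hc_def]
        split_ifs
        · exact le_rfl
        · nlinarith [ha_pos n, hε_lt1]
      have hc_summable : Summable c :=
        ha_summable.of_nonneg_of_le hc_nonneg hc_le_a
      have hbound : ∀ n, ‖(a n : ℂ) * u n z‖ ≤ c n := by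
        intro n
        rw [norm_mul, Complex.norm_real, Real.norm_eq_abs, abs_of_pos (ha_pos n)]
        simp only [hc_def]
        split_ifs with hn
        · calc a n * ‖u n z‖ ≤ a n * 1 := by
                apply mul_le_mul_of_nonneg_left _ (le_of_lt (ha_pos n))
                calc ‖u n z‖ ≤ ‖u n‖ := aux_norm_apply_le _ _
                _ = 1 := (huA n).2
          _ = a n := mul_one _
        · apply mul_le_mul_of_nonneg_left _ (le_of_lt (ha_pos n))
          exact le_of_lt (hnot n (by omega))
      have hgz : ‖g z‖ ≤ 1 - (1 - ε) * (1/2)^N := by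
        have h1 : ‖g z‖ ≤ ∑' n, c n := by
          rw [hg_apply z]
          calc ‖∑' n, (a n : ℂ) * u n z‖ ≤ ∑' n, ‖(a n : ℂ) * u n z‖ := by
                apply norm_tsum_le_tsum_norm
                exact hc_summable.of_nonneg_of_le (fun n => norm_nonneg _) hbound
          _ ≤ ∑' n, c n := by
                apply Summable.tsum_le_tsum hbound
                  (hc_summable.of_nonneg_of_le (fun n => norm_nonneg _) hbound) hc_summable
        have h2 : ∑' n, c n = 1 - (1 - ε) * (1/2)^N := by
          have hsplit := Summable.sum_add_tsum_nat_add (f := c) N hc_summable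
          have hhead : ∑ i ∈ Finset.range N, c i = 1 - (1/2)^N := by
            rw [← aux_geom_sum N]
            apply Finset.sum_congr rfl
            intro i hi
            simp only [Finset.mem_range] at hi
            simp only [hc_def, if_pos hi, ha_def]
          have htail : ∑' i, c (i + N) = ε * (1/2)^N := by
            have : (fun i => c (i + N)) = fun i => (ε * (1/2)^N) * (1/2)^(i+1) := by
              funext i
              simp only [hc_def, if_neg (by omega : ¬ (i + N < N)), ha_def]
              rw [pow_add]
              ring
            rw [this, (aux_hasSum_half.mul_left (ε * (1/2)^N)).tsum_eq, mul_one]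
          rw [← hsplit, hhead, htail]
          ring
        rw [h2] at h1
        exact h1
      -- combine
      rcases Nat.eq_zero_or_pos N with hN0 | hNpos
      · -- N = 0 : use ‖f z‖ ≤ 1 and ‖g z‖ ≤ ε
        have hfz1 : ‖f z‖ ≤ 1 := by rw [← hf]; exact aux_norm_apply_le f z
        have hgz' : ‖g z‖ ≤ ε := by
          rw [hN0] at hgz
          simpa using hgz
        have : (1 - r * m) * ‖g z‖ ≤ (1 - r * m) * ε₀ := by
          apply mul_le_mul_of_nonneg_left (le_trans hgz' hε_le) (le_of_lt hrm')
        rw [hε₀_key] at this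
        nlinarith
      · -- N ≥ 1
        obtain ⟨K, hK⟩ : ∃ K, N = K + 1 := ⟨N - 1, by omega⟩
        have hfz : ‖f z‖ < m + δ K := hNlt K (by omega)
        have hδK : δ K = C * (1/2)^N := by
          simp only [hδ_def, hK]
        have hrδ : r * δ K = (1 - r * m) * (1 - ε) * (1/2)^N := by
          rw [hδK]
          simp only [hC_def]
          field_simp
        have h1 : r * ‖f z‖ < r * m + (1 - r * m) * (1 - ε) * (1/2)^N := by
          calc r * ‖f z‖ < r * (m + δ K) := by
                apply mul_lt_mul_of_pos_left hfz hr0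
          _ = r * m + r * δ K := by ring
          _ = r * m + (1 - r * m) * (1 - ε) * (1/2)^N := by rw [hrδ]
        have h2 : (1 - r * m) * ‖g z‖ ≤ (1 - r * m) * (1 - (1 - ε) * (1/2)^N) :=
          mul_le_mul_of_nonneg_left hgz (le_of_lt hrm')
        nlinarith
  -- define h and conclude
  refine ⟨g, hgA, hg_norm, hgx₀, ?_, ?_⟩
  · -- ‖h‖ = 1
    set h : C₀(X, ℂ) := (r : ℂ) • f + (((1 - r * m : ℝ) : ℂ) * lam) • g with hh_def
    have hh_apply : ∀ z, h z = (r : ℂ) * f z + (((1 - r * m : ℝ) : ℂ) * lam) * g z := by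
      intro z
      rw [hh_def]
      simp [ZeroAtInftyContinuousMap.add_apply, ZeroAtInftyContinuousMap.smul_apply,
        smul_eq_mul]
    have hle : ‖h‖ ≤ 1 := by
      apply aux_norm_le h zero_le_one
      intro z
      rw [hh_apply z]
      calc ‖(r : ℂ) * f z + (((1 - r * m : ℝ) : ℂ) * lam) * g z‖
          ≤ ‖(r : ℂ) * f z‖ + ‖(((1 - r * m : ℝ) : ℂ) * lam) * g z‖ := norm_add_le _ _
        _ = r * ‖f z‖ + (1 - r * m) * ‖g z‖ := by
            rw [norm_mul, norm_mul, norm_mul, hlam1, Complex.norm_real, Complex.norm_real,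
              Real.norm_eq_abs, Real.norm_eq_abs, abs_of_pos hr0, abs_of_pos hrm', mul_one]
        _ ≤ 1 := hkey z
    have hge : (1:ℝ) ≤ ‖h‖ := by
      have : h x₀ = lam := by
        rw [hh_apply x₀, hfx₀, hgx₀]
        push_cast
        ring
      calc (1:ℝ) = ‖h x₀‖ := by rw [this, hlam1]
      _ ≤ ‖h‖ := aux_norm_apply_le h x₀
    linarith [hle, hge]
  · -- h x₀ = lam
    simp only [ZeroAtInftyContinuousMap.add_apply, ZeroAtInftyContinuousMap.smul_apply,
      smul_eq_mul, hgx₀, hfx₀, mul_one]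
    push_cast
    ring
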